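/- Let ρ be the standard Gaussian density on ℝ^d, U orthogonal, r ≤ d, and T(z) = U_r τ(z) + U_⊥ z_⊥ a lazy map with τ a diffeomorphism of ℝ^r. Then there exists a strictly positive function f : ℝ^r → ℝ_{>0} such that the pushforward density satisfies T_♯ρ(x) = f(U_rᵀ x) ρ(x) for all x ∈ ℝ^d. -/

import Mathlib

open MeasureTheory Matrix Filter
open scoped ENNReal

/-- Standard Gaussian density on `ℝ^d`. -/
noncomputable def gaussD (d : ℕ) (x : Fin d → ℝ) : ℝ :=
  (2 * Real.pi) ^ (-(d : ℝ) / 2) * Real.exp (-(∑ i, (x i) ^ 2) / 2)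

/-- Standard Gaussian measure on `ℝ^d`. -/
noncomputable def stdGauss (d : ℕ) : Measure (Fin d → ℝ) :=
  volume.withDensity (fun x => ENNReal.ofReal (gaussD d x))

open Classical in
/-- Kullback--Leibler divergence, valued in `ℝ≥0∞`. -/
noncomputable def klDiv {E : Type*} [MeasurableSpace E] (μ ν : Measure E) : ℝ≥0∞ :=
  if μ ≪ ν ∧ Integrable (fun x => Real.log ((μ.rnDeriv ν x).toReal)) μ
  then ENNReal.ofReal (∫ x, Real.log ((μ.rnDeriv ν x).toReal) ∂μ)
  else ⊤

/-- First `r` columns of a `d×d` matrix. -/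
def colsFirst {d : ℕ} (r : ℕ) (hr : r ≤ d) (U : Matrix (Fin d) (Fin d) ℝ) :
    Matrix (Fin d) (Fin r) ℝ :=
  fun i j => U i (Fin.castLE hr j)

/-- Last `d - r` columns of a `d×d` matrix. -/
def colsLast {d : ℕ} (r : ℕ) (hr : r ≤ d) (U : Matrix (Fin d) (Fin d) ℝ) :
    Matrix (Fin d) (Fin (d - r)) ℝ :=
  fun i j => U i ⟨r + (j : ℕ), by have := j.isLt; omega⟩

/-- A pair of maps forming a (C¹) diffeomorphism of `ℝ^n`. -/
def IsDiffeo {n : ℕ} (τ σ : (Fin n → ℝ) → (Fin n → ℝ)) : Prop :=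
  ContDiff ℝ 1 τ ∧ ContDiff ℝ 1 σ ∧ Function.LeftInverse σ τ ∧ Function.RightInverse σ τ

/-- The lazy map `T(z) = U_r τ(z_{1:r}) + U_⊥ z_⊥`. -/
noncomputable def lazyMap {d r : ℕ} (hr : r ≤ d) (U : Matrix (Fin d) (Fin d) ℝ)
    (τ : (Fin r → ℝ) → (Fin r → ℝ)) (z : Fin d → ℝ) : Fin d → ℝ :=
  (colsFirst r hr U).mulVec (τ (fun j => z (Fin.castLE hr j))) +
  (colsLast r hr U).mulVec (fun j => z ⟨r + (j : ℕ), by have := j.isLt; omega⟩)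

/-- Membership in the class `𝒯_r(U)` of lazy maps. -/
def IsLazy {d : ℕ} (r : ℕ) (hr : r ≤ d) (U : Matrix (Fin d) (Fin d) ℝ)
    (T : (Fin d → ℝ) → (Fin d → ℝ)) : Prop :=
  ∃ τ σ, IsDiffeo τ σ ∧ T = lazyMap hr U τ

section Aux
-- (aux content assumed imported via copy; for testing we put it here)
/-- The equivalence splitting `Fin d` into first `r` and last `d-r` indices. -/
def splitEquiv {d r : ℕ} (hr : r ≤ d) : Fin r ⊕ Fin (d - r) ≃ Fin d where
  toFun p := Sum.elim (fun j => Fin.castLE hr j)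
    (fun j : Fin (d - r) => (⟨r + (j : ℕ), by have := j.isLt; omega⟩ : Fin d)) p
  invFun i := if h : (i : ℕ) < r then Sum.inl ⟨i, h⟩
    else Sum.inr ⟨(i : ℕ) - r, by have := i.isLt; omega⟩
  left_inv p := by
    cases p with
    | inl j => simp [Fin.castLE, j.isLt]
    | inr j =>
      have : ¬ (r + (j : ℕ) < r) := by omega
      simp only [Sum.elim_inr, this, dif_neg, not_false_iff]
      congr 1
      simp [Fin.ext_iff]
  right_inv i := by
    by_cases h : (i : ℕ) < r
    · simp [h, Fin.ext_iff]
    · simp only [dif_neg h, Sum.elim_inr]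
      ext
      simp
      omega

lemma sum_split {d r : ℕ} (hr : r ≤ d) (g : Fin d → ℝ) :
    ∑ i, g i = (∑ j : Fin r, g (Fin.castLE hr j)) +
      ∑ j : Fin (d - r), g ⟨r + (j : ℕ), by have := j.isLt; omega⟩ := by
  rw [← Equiv.sum_comp (splitEquiv hr) g, Fintype.sum_sum_type]
  rfl

/-- Linear equivalence splitting `ℝ^d` into `ℝ^r × ℝ^{d-r}`. -/
noncomputable def splitLE {d r : ℕ} (hr : r ≤ d) :
    (Fin d → ℝ) ≃ₗ[ℝ] (Fin r → ℝ) × (Fin (d - r) → ℝ) where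
  toFun z := (fun j => z (Fin.castLE hr j), fun j => z ⟨r + (j : ℕ), by have := j.isLt; omega⟩)
  invFun p := fun i => if h : (i : ℕ) < r then p.1 ⟨i, h⟩
    else p.2 ⟨(i : ℕ) - r, by have := i.isLt; omega⟩
  map_add' z w := rfl
  map_smul' c z := rfl
  left_inv z := by
    funext i
    by_cases h : (i : ℕ) < r
    · simp only [dif_pos h]
      congr 1
    · simp only [dif_neg h]
      congr 1
      ext
      simp
      omega
  right_inv p := by
    ext j
    · have h : ((Fin.castLE hr j : Fin d) : ℕ) < r := j.isLt
      simp only [dif_pos h]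
      congr 1
    · have h : ¬ ((r + (j : ℕ)) < r) := by omega
      simp only [dif_neg h]
      exact congrArg p.2 (Fin.ext (by simp))

lemma splitLE_symm_lt {d r : ℕ} (hr : r ≤ d) (p : (Fin r → ℝ) × (Fin (d - r) → ℝ)) (j : Fin r) :
    (splitLE hr).symm p (Fin.castLE hr j) = p.1 j := by
  have h : ((Fin.castLE hr j : Fin d) : ℕ) < r := j.isLt
  show (if h : _ then _ else _) = _
  simp only [dif_pos h]
  congr 1

lemma splitLE_symm_ge {d r : ℕ} (hr : r ≤ d) (p : (Fin r → ℝ) × (Fin (d - r) → ℝ))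
    (j : Fin (d - r)) :
    (splitLE hr).symm p ⟨r + (j : ℕ), by have := j.isLt; omega⟩ = p.2 j := by
  have h : ¬ ((r + (j : ℕ)) < r) := by omega
  show (if h : _ then _ else _) = _
  simp only [dif_neg h]
  exact congrArg p.2 (Fin.ext (by simp))

lemma det_prodMap' {n m : ℕ} (f : (Fin n → ℝ) →ₗ[ℝ] (Fin n → ℝ))
    (g : (Fin m → ℝ) →ₗ[ℝ] (Fin m → ℝ)) :
    LinearMap.det (f.prodMap g) = LinearMap.det f * LinearMap.det g := by
  classical
  let b₁ := Pi.basisFun ℝ (Fin n)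
  let b₂ := Pi.basisFun ℝ (Fin m)
  rw [← LinearMap.det_toMatrix (b₁.prod b₂), LinearMap.toMatrix_prodMap b₁ b₂ f g,
    Matrix.det_fromBlocks_zero₁₂, LinearMap.det_toMatrix, LinearMap.det_toMatrix]

lemma norm_mulVec_transpose {d : ℕ} (U : Matrix (Fin d) (Fin d) ℝ) (hU : U * Uᵀ = 1)
    (x : Fin d → ℝ) : ∑ i, ((Uᵀ *ᵥ x) i) ^ 2 = ∑ i, (x i) ^ 2 := by
  have h1 : ∀ v : Fin d → ℝ, ∑ i, (v i) ^ 2 = v ⬝ᵥ v := by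
    intro v
    simp [dotProduct, sq]
  rw [h1, h1, dotProduct_mulVec, Matrix.vecMul_transpose, Matrix.mulVec_mulVec, hU,
    Matrix.one_mulVec]

end Aux

section Main

variable {d r : ℕ}

lemma lazyMap_eq_split (hr : r ≤ d) (U : Matrix (Fin d) (Fin d) ℝ)
    (τ : (Fin r → ℝ) → (Fin r → ℝ)) (z : Fin d → ℝ) :
    lazyMap hr U τ z = U.mulVec ((splitLE hr).symm (Prod.map τ id (splitLE hr z))) := by
  funext i
  have hs := sum_split hr (fun k => U i k * ((splitLE hr).symm (Prod.map τ id (splitLE hr z))) k)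
  show (colsFirst r hr U).mulVec _ i + (colsLast r hr U).mulVec _ i = _
  show _ = ∑ k, U i k * ((splitLE hr).symm (Prod.map τ id (splitLE hr z))) k
  rw [hs]
  congr 1
  · show ∑ j : Fin r, colsFirst r hr U i j * τ (fun j => z (Fin.castLE hr j)) j = _
    refine Finset.sum_congr rfl fun j _ => ?_
    rw [splitLE_symm_lt hr]
    rfl
  · show ∑ j : Fin (d - r), colsLast r hr U i j * z ⟨r + (j : ℕ), _⟩ = _
    refine Finset.sum_congr rfl fun j _ => ?_
    rw [splitLE_symm_ge hr]
    rfl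

lemma colsFirst_transpose_mulVec (hr : r ≤ d) (U : Matrix (Fin d) (Fin d) ℝ) (x : Fin d → ℝ) :
    (colsFirst r hr U)ᵀ.mulVec x = (splitLE hr (Uᵀ *ᵥ x)).1 := by
  funext j
  show ∑ i, (colsFirst r hr U)ᵀ j i * x i = ∑ i, Uᵀ (Fin.castLE hr j) i * x i
  refine Finset.sum_congr rfl fun i _ => ?_
  rfl

/-- the pushforward of the standard Gaussian under a lazy map has density
`f(U_rᵀ x) ρ(x)` for some strictly positive `f : ℝ^r → ℝ`. -/
theorem lazyMap_pushforward_density {d r : ℕ} (hr : r ≤ d)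
    (U : Matrix (Fin d) (Fin d) ℝ) (hU : U * Uᵀ = 1)
    (τ σ : (Fin r → ℝ) → (Fin r → ℝ)) (hτ : IsDiffeo τ σ) :
    ∃ f : (Fin r → ℝ) → ℝ, (∀ y, 0 < f y) ∧
      Measure.map (lazyMap hr U τ) (stdGauss d) =
        volume.withDensity
          (fun x => ENNReal.ofReal (f ((colsFirst r hr U)ᵀ.mulVec x) * gaussD d x)) := by
  classical
  obtain ⟨hτc, hσc, hls, hrs⟩ := hτ
  have hUtU : Uᵀ * U = 1 := mul_eq_one_comm.mp hU
  set e := splitLE (d := d) (r := r) hr with he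
  set S : (Fin d → ℝ) → (Fin d → ℝ) :=
    fun x => e.symm (Prod.map σ id (e (Uᵀ *ᵥ x))) with hS
  -- inverse identities
  have hST : ∀ z, S (lazyMap hr U τ z) = z := by
    intro z
    rw [hS, lazyMap_eq_split hr U τ z]
    show e.symm (Prod.map σ id (e (Uᵀ *ᵥ (U *ᵥ (e.symm (Prod.map τ id (e z))))))) = z
    rw [Matrix.mulVec_mulVec, hUtU, Matrix.one_mulVec, LinearEquiv.apply_symm_apply]
    have h2 : Prod.map σ id (Prod.map τ id (e z)) = e z := Prod.ext (hls _) rfl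
    rw [h2, LinearEquiv.symm_apply_apply]
  have hTS : ∀ x, lazyMap hr U τ (S x) = x := by
    intro x
    rw [lazyMap_eq_split hr U τ (S x), hS]
    show U *ᵥ (e.symm (Prod.map τ id (e (e.symm (Prod.map σ id (e (Uᵀ *ᵥ x))))))) = x
    rw [LinearEquiv.apply_symm_apply]
    have h2 : Prod.map τ id (Prod.map σ id (e (Uᵀ *ᵥ x))) = e (Uᵀ *ᵥ x) := Prod.ext (hrs _) rfl
    rw [h2, LinearEquiv.symm_apply_apply, Matrix.mulVec_mulVec, hU, Matrix.one_mulVec]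
  -- continuity
  have hecont : Continuous e := LinearMap.continuous_of_finiteDimensional e.toLinearMap
  have hesymmcont : Continuous e.symm := LinearMap.continuous_of_finiteDimensional e.symm.toLinearMap
  have hTcont : Continuous (lazyMap hr U τ) := by
    have : lazyMap hr U τ = fun z => U.mulVec (e.symm (Prod.map τ id (e z))) :=
      funext fun z => lazyMap_eq_split hr U τ z
    rw [this]
    exact (LinearMap.continuous_of_finiteDimensional (Matrix.mulVecLin U)).comp
      (hesymmcont.comp ((hτc.continuous.prodMap continuous_id).comp hecont))
  have hTmeas : Measurable (lazyMap hr U τ) := hTcont.measurable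
  -- derivatives
  have hσd : ∀ y, HasFDerivAt σ (fderiv ℝ σ y) y :=
    fun y => (hσc.differentiable one_ne_zero y).hasFDerivAt
  have hτd : ∀ y, HasFDerivAt τ (fderiv ℝ τ y) y :=
    fun y => (hτc.differentiable one_ne_zero y).hasFDerivAt
  set Eo : (Fin d → ℝ) ≃L[ℝ] (Fin r → ℝ) × (Fin (d - r) → ℝ) := e.toContinuousLinearEquiv with hEo
  set Mt : (Fin d → ℝ) →L[ℝ] (Fin d → ℝ) :=
    LinearMap.toContinuousLinearMap (Matrix.mulVecLin Uᵀ) with hMt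
  set y : (Fin d → ℝ) → (Fin r → ℝ) := fun x => (e (Uᵀ *ᵥ x)).1 with hy
  set S' : (Fin d → ℝ) → ((Fin d → ℝ) →L[ℝ] (Fin d → ℝ)) := fun x =>
    ((Eo.symm : (Fin r → ℝ) × (Fin (d - r) → ℝ) →L[ℝ] (Fin d → ℝ)).comp
      (((fderiv ℝ σ (y x)).prodMap (ContinuousLinearMap.id ℝ (Fin (d - r) → ℝ))).comp
        ((Eo : (Fin d → ℝ) →L[ℝ] (Fin r → ℝ) × (Fin (d - r) → ℝ)).comp Mt))) with hS'def
  have hS' : ∀ x, HasFDerivAt S (S' x) x := by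
    intro x
    have h0 : HasFDerivAt (fun x : Fin d → ℝ => Uᵀ *ᵥ x) Mt x := Mt.hasFDerivAt
    have h1 : HasFDerivAt (⇑e) ((Eo : (Fin d → ℝ) →L[ℝ] _)) (Uᵀ *ᵥ x) := Eo.hasFDerivAt
    have h2 : HasFDerivAt (Prod.map σ (id : (Fin (d - r) → ℝ) → (Fin (d - r) → ℝ)))
        ((fderiv ℝ σ (y x)).prodMap (ContinuousLinearMap.id ℝ (Fin (d - r) → ℝ)))
        (e (Uᵀ *ᵥ x)) := (hσd (y x)).prodMap _ (hasFDerivAt_id _)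
    have h3 : HasFDerivAt (⇑e.symm) ((Eo.symm : _ →L[ℝ] (Fin d → ℝ)))
        (Prod.map σ id (e (Uᵀ *ᵥ x))) := Eo.symm.hasFDerivAt
    have h4 := h2.comp x (h1.comp x h0)
    exact h3.comp x h4
  -- determinant of the derivative
  have hdetU : |Uᵀ.det| = 1 := by
    have h1 := congrArg Matrix.det hU
    rw [Matrix.det_mul, Matrix.det_one, Matrix.det_transpose] at h1
    rw [Matrix.det_transpose]
    rcases mul_self_eq_one_iff.mp h1 with h | h <;> rw [h] <;> norm_num
  have hdetS' : ∀ x, |(S' x).det| = |LinearMap.det ((fderiv ℝ σ (y x)) : (Fin r → ℝ) →ₗ[ℝ] (Fin r → ℝ))| := by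
    intro x
    have h1 : ((S' x) : (Fin d → ℝ) →ₗ[ℝ] (Fin d → ℝ)) =
        ((e.symm : (Fin r → ℝ) × (Fin (d - r) → ℝ) →ₗ[ℝ] (Fin d → ℝ)) ∘ₗ
          (((fderiv ℝ σ (y x)) : (Fin r → ℝ) →ₗ[ℝ] (Fin r → ℝ)).prodMap
            (LinearMap.id : (Fin (d - r) → ℝ) →ₗ[ℝ] (Fin (d - r) → ℝ)) ∘ₗ
            (e : (Fin d → ℝ) →ₗ[ℝ] (Fin r → ℝ) × (Fin (d - r) → ℝ)))) ∘ₗ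
          (Matrix.mulVecLin Uᵀ) := by
      apply LinearMap.ext
      intro v
      rfl
    show |LinearMap.det ((S' x) : (Fin d → ℝ) →ₗ[ℝ] (Fin d → ℝ))| = _
    rw [h1, LinearMap.det_comp]
    have h2 : LinearMap.det
        ((e.symm : (Fin r → ℝ) × (Fin (d - r) → ℝ) →ₗ[ℝ] (Fin d → ℝ)) ∘ₗ
          (((fderiv ℝ σ (y x)) : (Fin r → ℝ) →ₗ[ℝ] (Fin r → ℝ)).prodMap
            (LinearMap.id : (Fin (d - r) → ℝ) →ₗ[ℝ] (Fin (d - r) → ℝ)) ∘ₗ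
            (e : (Fin d → ℝ) →ₗ[ℝ] (Fin r → ℝ) × (Fin (d - r) → ℝ)))) =
        LinearMap.det (((fderiv ℝ σ (y x)) : (Fin r → ℝ) →ₗ[ℝ] (Fin r → ℝ)).prodMap
            (LinearMap.id : (Fin (d - r) → ℝ) →ₗ[ℝ] (Fin (d - r) → ℝ))) := by
      have h3 := LinearMap.det_conj
        (((fderiv ℝ σ (y x)) : (Fin r → ℝ) →ₗ[ℝ] (Fin r → ℝ)).prodMap
            (LinearMap.id : (Fin (d - r) → ℝ) →ₗ[ℝ] (Fin (d - r) → ℝ))) e.symm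
      rw [LinearEquiv.symm_symm] at h3
      exact h3
    rw [h2, det_prodMap', LinearMap.det_id, ← Matrix.toLin'_apply', LinearMap.det_toLin']
    rw [abs_mul, abs_mul, hdetU]
    simp
  -- the density function
  set f : (Fin r → ℝ) → ℝ := fun v =>
    |LinearMap.det ((fderiv ℝ σ v) : (Fin r → ℝ) →ₗ[ℝ] (Fin r → ℝ))| *
      Real.exp ((∑ j, (v j) ^ 2 - ∑ j, (σ v j) ^ 2) / 2) with hf
  have hfpos : ∀ v, 0 < f v := by
    intro v
    have hchain : HasFDerivAt (τ ∘ σ) ((fderiv ℝ τ (σ v)).comp (fderiv ℝ σ v)) v :=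
      (hτd (σ v)).comp v (hσd v)
    have hid : (τ ∘ σ) = id := funext hrs
    rw [hid] at hchain
    have h2 := hchain.unique (hasFDerivAt_id v)
    have h3 : LinearMap.det (((fderiv ℝ τ (σ v)).comp (fderiv ℝ σ v) :
        (Fin r → ℝ) →L[ℝ] (Fin r → ℝ)) : (Fin r → ℝ) →ₗ[ℝ] (Fin r → ℝ)) = 1 := by
      rw [h2]
      simp
    rw [ContinuousLinearMap.toLinearMap_comp, LinearMap.det_comp] at h3
    exact mul_pos (abs_pos.mpr (right_ne_zero_of_mul_eq_one h3)) (Real.exp_pos _)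
  refine ⟨f, hfpos, ?_⟩
  refine Measure.ext fun A hA => ?_
  rw [Measure.map_apply hTmeas hA]
  show (volume.withDensity (fun x => ENNReal.ofReal (gaussD d x))) _ = _
  rw [withDensity_apply _ (hTmeas hA), withDensity_apply _ hA]
  have hpre : (lazyMap hr U τ) ⁻¹' A = S '' A := by
    ext x
    constructor
    · intro hx
      exact ⟨lazyMap hr U τ x, hx, hST x⟩
    · rintro ⟨a, ha, rfl⟩
      show lazyMap hr U τ (S a) ∈ A
      rw [hTS a]
      exact ha
  rw [hpre]
  have hinj : Set.InjOn S A := by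
    intro a _ b _ hab
    have := congrArg (lazyMap hr U τ) hab
    rwa [hTS, hTS] at this
  rw [lintegral_image_eq_lintegral_abs_det_fderiv_mul volume hA
    (fun x _ => (hS' x).hasFDerivWithinAt) hinj]
  refine lintegral_congr fun x => ?_
  have hyx : (colsFirst r hr U)ᵀ.mulVec x = y x := colsFirst_transpose_mulVec hr U x
  have key : |(S' x).det| * gaussD d (S x) = f ((colsFirst r hr U)ᵀ.mulVec x) * gaussD d x := by
    rw [hyx, hdetS' x, hf]
    have hSx : S x = e.symm (σ (y x), (e (Uᵀ *ᵥ x)).2) := rfl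
    have hsum1 : ∑ i, (S x i) ^ 2 =
        (∑ j, (σ (y x) j) ^ 2) + ∑ j, ((e (Uᵀ *ᵥ x)).2 j) ^ 2 := by
      rw [sum_split hr (fun i => (S x i) ^ 2)]
      congr 1
      · refine Finset.sum_congr rfl fun j _ => ?_
        rw [hSx, splitLE_symm_lt hr]
      · refine Finset.sum_congr rfl fun j _ => ?_
        rw [hSx, splitLE_symm_ge hr]
    have hsum2 : ∑ i, (x i) ^ 2 = (∑ j, (y x j) ^ 2) + ∑ j, ((e (Uᵀ *ᵥ x)).2 j) ^ 2 := by
      rw [← norm_mulVec_transpose U hU x, sum_split hr (fun i => ((Uᵀ *ᵥ x) i) ^ 2)]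
      rfl
    show _ * gaussD d (S x) =
      (|LinearMap.det ((fderiv ℝ σ (y x)) : (Fin r → ℝ) →ₗ[ℝ] (Fin r → ℝ))| *
        Real.exp ((∑ j, (y x j) ^ 2 - ∑ j, (σ (y x) j) ^ 2) / 2)) * gaussD d x
    rw [gaussD, gaussD, hsum1, hsum2]
    have hexp : Real.exp ((∑ j, (y x j) ^ 2 - ∑ j, (σ (y x) j) ^ 2) / 2) *
        Real.exp (-((∑ j, (y x j) ^ 2) + ∑ j, ((e (Uᵀ *ᵥ x)).2 j) ^ 2) / 2) =
        Real.exp (-((∑ j, (σ (y x) j) ^ 2) + ∑ j, ((e (Uᵀ *ᵥ x)).2 j) ^ 2) / 2) := by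
      rw [← Real.exp_add]
      congr 1
      ring
    rw [← hexp]
    ring
  rw [← ENNReal.ofReal_mul (abs_nonneg _), key]

end Main
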